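/- Let G(u,v) = (u + u²v − u²v², v). For p ≥ 2, the largest integer κ such that every polynomial ψ(x,y) of total degree ≤ κ satisfies ψ ∘ G ∈ ℚ^p is κ = ⌊p/2⌋. -/
import Mathlib

/-- `f` is a polynomial of degree at most `k` in each of the two variables
(i.e. it lies in the tensor-product space `ℚ^k`). -/
def QdegLE (k : ℕ) (f : ℝ → ℝ → ℝ) : Prop :=
  ∃ q : MvPolynomial (Fin 2) ℝ, (∀ i, q.degreeOf i ≤ k) ∧
    ∀ u v : ℝ, MvPolynomial.eval ![u, v] q = f u v

open MvPolynomial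

/-- The substitution `G` as a pair of polynomials. -/
noncomputable def gG : Fin 2 → MvPolynomial (Fin 2) ℝ :=
  ![X 0 + (X 0) ^ 2 * X 1 - (X 0) ^ 2 * (X 1) ^ 2, X 1]

lemma eval_aeval_gG (ψ : MvPolynomial (Fin 2) ℝ) (u v : ℝ) :
    eval ![u, v] (aeval gG ψ) = eval ![u + u ^ 2 * v - u ^ 2 * v ^ 2, v] ψ := by
  induction ψ using MvPolynomial.induction_on with
  | C a => simp
  | add f g hf hg => simp only [map_add, hf, hg]
  | mul_X f i hf =>
    simp only [map_mul, aeval_X, hf]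
    congr 1
    fin_cases i <;> simp [gG]

lemma degreeOf_sum_le {ι : Type*} (s : Finset ι) (f : ι → MvPolynomial (Fin 2) ℝ)
    (i : Fin 2) (n : ℕ) (h : ∀ j ∈ s, degreeOf i (f j) ≤ n) :
    degreeOf i (∑ j ∈ s, f j) ≤ n := by
  classical
  induction s using Finset.induction_on with
  | empty => simp
  | @insert a s ha ih =>
    rw [Finset.sum_insert ha]
    refine le_trans (degreeOf_add_le _ _ _) (max_le ?_ ?_)
    · exact h a (Finset.mem_insert_self a s)
    · exact ih fun j hj => h j (Finset.mem_insert_of_mem hj)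

lemma degreeOf_gG (i j : Fin 2) : degreeOf i (gG j) ≤ 2 := by
  fin_cases j
  · show degreeOf i (X 0 + (X 0) ^ 2 * X 1 - (X 0) ^ 2 * (X 1) ^ 2) ≤ 2
    rw [sub_eq_add_neg]
    refine le_trans (degreeOf_add_le _ _ _) (max_le ?_ ?_)
    · refine le_trans (degreeOf_add_le _ _ _) (max_le ?_ ?_)
      · fin_cases i <;> simp [degreeOf_X]
      · refine le_trans (degreeOf_mul_le _ _ _) ?_
        have h1 := degreeOf_pow_le i (X 0 : MvPolynomial (Fin 2) ℝ) 2
        have h2 : degreeOf i (X 1 : MvPolynomial (Fin 2) ℝ) ≤ 1 := by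
          fin_cases i <;> simp [degreeOf_X]
        fin_cases i <;> simp_all [degreeOf_X] <;> omega
    · rw [degreeOf_neg]
      refine le_trans (degreeOf_mul_le _ _ _) ?_
      have h1 := degreeOf_pow_le i (X 0 : MvPolynomial (Fin 2) ℝ) 2
      have h2 := degreeOf_pow_le i (X 1 : MvPolynomial (Fin 2) ℝ) 2
      fin_cases i <;> simp_all [degreeOf_X] <;> omega
  · show degreeOf i (X 1) ≤ 2
    fin_cases i <;> simp [degreeOf_X]

lemma degreeOf_aeval_gG (ψ : MvPolynomial (Fin 2) ℝ) (i : Fin 2) :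
    degreeOf i (aeval gG ψ) ≤ 2 * ψ.totalDegree := by
  conv_lhs => rw [ψ.as_sum]
  rw [map_sum]
  refine degreeOf_sum_le _ _ _ _ fun d hd => ?_
  rw [aeval_monomial, Finsupp.prod_fintype _ _ (fun _ => pow_zero _), Fin.prod_univ_two]
  have hsum : d 0 + d 1 ≤ ψ.totalDegree := by
    have := le_totalDegree hd
    rwa [Finsupp.sum_fintype _ _ (fun _ => rfl), Fin.sum_univ_two] at this
  calc degreeOf i (algebraMap ℝ _ (coeff d ψ) * (gG 0 ^ d 0 * gG 1 ^ d 1))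
      ≤ degreeOf i (algebraMap ℝ _ (coeff d ψ)) + degreeOf i (gG 0 ^ d 0 * gG 1 ^ d 1) :=
        degreeOf_mul_le _ _ _
    _ ≤ 0 + (degreeOf i (gG 0 ^ d 0) + degreeOf i (gG 1 ^ d 1)) := by
        refine add_le_add ?_ (degreeOf_mul_le _ _ _)
        simp [algebraMap_eq, degreeOf_C]
    _ ≤ 0 + (d 0 * degreeOf i (gG 0) + d 1 * degreeOf i (gG 1)) := by
        exact add_le_add le_rfl (add_le_add (degreeOf_pow_le _ _ _) (degreeOf_pow_le _ _ _))
    _ ≤ 0 + (d 0 * 2 + d 1 * 2) := by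
        refine add_le_add le_rfl (add_le_add ?_ ?_) <;>
          exact Nat.mul_le_mul_left _ (degreeOf_gG _ _)
    _ ≤ 2 * ψ.totalDegree := by omega

/-- Partial evaluation at `v = 1/2`, yielding a univariate polynomial in `u`. -/
noncomputable def Φ : MvPolynomial (Fin 2) ℝ →+* Polynomial ℝ :=
  eval₂Hom (Polynomial.C : ℝ →+* Polynomial ℝ) ![Polynomial.X, Polynomial.C (2⁻¹ : ℝ)]

lemma natDegree_Φ_le (q : MvPolynomial (Fin 2) ℝ) :
    (Φ q).natDegree ≤ degreeOf 0 q := by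
  conv_lhs => rw [q.as_sum]
  rw [map_sum]
  refine Polynomial.natDegree_sum_le_of_forall_le _ _ fun d hd => ?_
  have hd0 : d 0 ≤ degreeOf 0 q := degreeOf_le_iff.mp le_rfl d hd
  show (Φ (monomial d (coeff d q))).natDegree ≤ degreeOf 0 q
  rw [Φ, eval₂Hom_monomial, Finsupp.prod_fintype _ _ (fun _ => pow_zero _), Fin.prod_univ_two]
  simp only [Matrix.cons_val_zero, Matrix.cons_val_one, Matrix.head_cons]
  calc (Polynomial.C (coeff d q) * (Polynomial.X ^ d 0 * Polynomial.C (2⁻¹ : ℝ) ^ d 1)).natDegree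
      ≤ (Polynomial.C (coeff d q)).natDegree +
        (Polynomial.X ^ d 0 * Polynomial.C (2⁻¹ : ℝ) ^ d 1 : Polynomial ℝ).natDegree :=
        Polynomial.natDegree_mul_le
    _ ≤ 0 + (((Polynomial.X : Polynomial ℝ) ^ d 0).natDegree +
        ((Polynomial.C (2⁻¹ : ℝ)) ^ d 1).natDegree) := by
        refine add_le_add ?_ Polynomial.natDegree_mul_le
        simp
    _ ≤ d 0 := by
        rw [← Polynomial.C_pow]
        simp
    _ ≤ degreeOf 0 q := hd0

lemma Phi_gG0 : Φ (gG 0) = Polynomial.C (4⁻¹ : ℝ) * Polynomial.X ^ 2 +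
    Polynomial.C 1 * Polynomial.X + Polynomial.C 0 := by
  show Φ (X 0 + (X 0) ^ 2 * X 1 - (X 0) ^ 2 * (X 1) ^ 2) = _
  rw [map_sub, map_add, map_mul, map_pow, map_mul, map_pow, map_pow]
  rw [Φ]
  simp only [eval₂Hom_X', Matrix.cons_val_zero, Matrix.cons_val_one, Matrix.head_cons]
  rw [← Polynomial.C_pow]
  have : (2⁻¹ : ℝ) ^ 2 = 4⁻¹ := by norm_num
  rw [this]
  have h4 : (2⁻¹ : ℝ) - 4⁻¹ = 4⁻¹ := by norm_num
  rw [add_sub_assoc, ← mul_sub, ← Polynomial.C_sub, h4]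
  simp only [Polynomial.C_1, Polynomial.C_0]
  ring

/-- For `G(u,v) = (u + u²v − u²v², v)` and `p ≥ 2`, the largest `κ` such that every
polynomial `ψ(x,y)` of total degree `≤ κ` satisfies `ψ ∘ G ∈ ℚ^p` is `κ = ⌊p/2⌋`. -/
theorem reproduction_degree_of_G (p : ℕ) (hp : 2 ≤ p) :
    IsGreatest
      {κ : ℕ | ∀ ψ : MvPolynomial (Fin 2) ℝ, ψ.totalDegree ≤ κ →
        QdegLE p (fun u v =>
          MvPolynomial.eval ![u + u ^ 2 * v - u ^ 2 * v ^ 2, v] ψ)}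
      (p / 2) := by
  constructor
  · -- membership
    intro ψ hψ
    refine ⟨aeval gG ψ, fun i => ?_, fun u v => eval_aeval_gG ψ u v⟩
    refine le_trans (degreeOf_aeval_gG ψ i) ?_
    have := hψ
    omega
  · -- upper bound
    intro κ hκ
    by_contra h
    push_neg at h
    set n := p / 2 + 1 with hn
    have hψdeg : (X 0 ^ n : MvPolynomial (Fin 2) ℝ).totalDegree ≤ κ := by
      rw [totalDegree_X_pow]; omega
    obtain ⟨q, hdeg, heval⟩ := hκ (X 0 ^ n) hψdeg
    have hq : q = aeval gG ((X 0 : MvPolynomial (Fin 2) ℝ) ^ n) := by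
      apply MvPolynomial.funext
      intro x
      have hx : x = ![x 0, x 1] := by
        funext i; fin_cases i <;> rfl
      rw [hx, heval (x 0) (x 1), eval_aeval_gG]
    have hΦ : Φ q = (Polynomial.C (4⁻¹ : ℝ) * Polynomial.X ^ 2 +
        Polynomial.C 1 * Polynomial.X + Polynomial.C 0) ^ n := by
      rw [hq]
      simp only [map_pow, aeval_X]
      rw [Phi_gG0]
    have hnd : (Φ q).natDegree = 2 * n := by
      rw [hΦ, Polynomial.natDegree_pow, Polynomial.natDegree_quadratic (by norm_num : (4⁻¹:ℝ) ≠ 0)]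
      ring
    have := natDegree_Φ_le q
    have := hdeg 0
    omega
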